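/- arXiv:1805.12119 — 2 statements merged into one kernel-verified Lean document; each statement's English description precedes it below -/
import Mathlib

section
/- A finite group G is an elementary abelian 2-group of rank at least 2 if and only if its power graph 𝒢(G) is non-complete and minimally connected. -/
open Subgroup

/-- The power graph of a group: distinct `u`, `v` are adjacent iff one is a
positive integer power of the other. -/
def powerGraph (G : Type*) [Group G] : SimpleGraph G where
  Adj u v := u ≠ v ∧ ((∃ n : ℕ, 0 < n ∧ v = u ^ n) ∨ (∃ m : ℕ, 0 < m ∧ u = v ^ m))
  symm := ⟨fun u v h => ⟨h.1.symm, h.2.symm⟩⟩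
  loopless := ⟨fun u h => h.1 rfl⟩

/-- The degree of a vertex in a graph. -/
noncomputable def gDegree {V : Type*} (Γ : SimpleGraph V) (x : V) : ℕ :=
  (Γ.neighborSet x).ncard

/-- The minimum degree δ(Γ) of a graph. -/
noncomputable def gMinDegree {V : Type*} (Γ : SimpleGraph V) : ℕ :=
  sInf (Set.range (gDegree Γ))

/-- The edge-connectivity κ'(Γ): the least size of a set of edges whose deletion
disconnects the graph. -/
noncomputable def edgeConn {V : Type*} (Γ : SimpleGraph V) : ℕ :=
  sInf {k | ∃ s : Finset (Sym2 V), s.card = k ∧ ↑s ⊆ Γ.edgeSet ∧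
    ¬ (Γ.deleteEdges ↑s).Connected}

/-- The vertex connectivity κ(Γ): the least size of a set of vertices whose deletion
disconnects the graph or leaves at most one vertex. -/
noncomputable def vertConn {V : Type*} (Γ : SimpleGraph V) : ℕ :=
  sInf {k | ∃ S : Set V, S.Finite ∧ S.ncard = k ∧
    (¬ (Γ.induce Sᶜ).Preconnected ∨ Sᶜ.Subsingleton)}

/-- A nontrivial connected graph is minimally edge-connected if deleting any edge
drops the edge-connectivity by exactly one. -/
def MinimallyEdgeConnected {V : Type*} (Γ : SimpleGraph V) : Prop :=
  Nontrivial V ∧ Γ.Connected ∧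
    ∀ e ∈ Γ.edgeSet, edgeConn (Γ.deleteEdges {e}) = edgeConn Γ - 1

/-- A nontrivial connected graph is minimally connected if deleting any edge
drops the vertex connectivity by exactly one. -/
def MinimallyConnected {V : Type*} (Γ : SimpleGraph V) : Prop :=
  Nontrivial V ∧ Γ.Connected ∧
    ∀ e ∈ Γ.edgeSet, vertConn (Γ.deleteEdges {e}) = vertConn Γ - 1

/-- `S` is a separating set of `Γ` if deleting the vertices of `S` leaves a
disconnected graph. -/
def IsSeparatingSet {V : Type*} (Γ : SimpleGraph V) (S : Set V) : Prop :=
  ¬ (Γ.induce Sᶜ).Preconnected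

/-- `S` is a minimum separating set of `Γ`. -/
def IsMinSeparatingSet {V : Type*} (Γ : SimpleGraph V) (S : Set V) : Prop :=
  IsSeparatingSet Γ S ∧ ∀ T : Set V, IsSeparatingSet Γ T → S.ncard ≤ T.ncard

/-- `y` generates a maximal cyclic subgroup of `G`: the cyclic subgroup `⟨y⟩` is
not properly contained in any cyclic subgroup. -/
def IsMaxCyclicGen {G : Type*} [Group G] (y : G) : Prop :=
  ∀ z : G, zpowers y ≤ zpowers z → zpowers y = zpowers z

/-- A subgroup is maximal cyclic if it is cyclic and not properly contained in
any cyclic subgroup. -/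
def IsMaximalCyclicSubgroup {G : Type*} [Group G] (H : Subgroup G) : Prop :=
  (∃ y : G, H = zpowers y) ∧ ∀ z : G, H ≤ zpowers z → H = zpowers z

set_option linter.unusedSectionVars false in
section
section helpers
variable {G : Type*} [Group G] [Fintype G]

lemma pg_adj_one {y : G} (hy : y ≠ 1) : (powerGraph G).Adj 1 y :=
  ⟨fun h => hy h.symm, Or.inr ⟨orderOf y, orderOf_pos y, (pow_orderOf_eq_one y).symm⟩⟩

lemma pow_pred (y : G) : y ^ (orderOf y - 1) = y⁻¹ := by
  have h1 : 1 ≤ orderOf y := orderOf_pos y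
  have h : y ^ (orderOf y - 1) * y = 1 := by
    rw [← pow_succ, Nat.sub_add_cancel h1, pow_orderOf_eq_one]
  exact eq_inv_of_mul_eq_one_left h

lemma two_le_orderOf {y : G} (hy : y ≠ 1) : 2 ≤ orderOf y := by
  have := orderOf_pos y
  have : orderOf y ≠ 1 := fun h => hy (orderOf_eq_one_iff.mp h)
  omega

lemma pg_adj_inv {x z : G} (h : (powerGraph G).Adj x z) (hz : z ≠ x⁻¹) :
    (powerGraph G).Adj x⁻¹ z := by
  rcases h with ⟨hne, hp⟩
  refine ⟨fun hh => hz hh.symm, ?_⟩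
  rcases hp with ⟨n, hn, rfl⟩ | ⟨m, hm, hx⟩
  · have hx1 : x ≠ 1 := by rintro rfl; simp at hne
    have hd : 2 ≤ orderOf x := two_le_orderOf hx1
    refine Or.inl ⟨n * (orderOf x - 1), Nat.mul_pos hn (by omega), ?_⟩
    have : orderOf x⁻¹ = orderOf x := orderOf_inv x
    calc x ^ n = ((x⁻¹)⁻¹) ^ n := by rw [inv_inv]
    _ = ((x⁻¹) ^ (orderOf x⁻¹ - 1)) ^ n := by rw [pow_pred]
    _ = (x⁻¹) ^ (n * (orderOf x - 1)) := by rw [← pow_mul, this, mul_comm]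
  · have hz1 : z ≠ 1 := by rintro rfl; exact hz (by rw [hx, one_pow, inv_one])
    have ho : 2 ≤ orderOf z := two_le_orderOf hz1
    refine Or.inr ⟨m * (orderOf z - 1), Nat.mul_pos hm (by omega), ?_⟩
    calc x⁻¹ = (z ^ m)⁻¹ := by rw [hx]
    _ = (z⁻¹) ^ m := by rw [inv_pow]
    _ = (z ^ (orderOf z - 1)) ^ m := by rw [pow_pred]
    _ = z ^ (m * (orderOf z - 1)) := by rw [← pow_mul, mul_comm]

lemma pg_adj_self_inv {x : G} (h1 : x ≠ 1) (h2 : orderOf x ≠ 2) :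
    (powerGraph G).Adj x x⁻¹ := by
  have hd : 2 ≤ orderOf x := two_le_orderOf h1
  have hd3 : 3 ≤ orderOf x := by omega
  refine ⟨fun h => ?_, Or.inl ⟨orderOf x - 1, by omega, (pow_pred x).symm⟩⟩
  have hx2 : x ^ 2 = 1 := by rw [pow_two]; nth_rewrite 2 [h]; rw [mul_inv_cancel]
  have := orderOf_le_of_pow_eq_one (by norm_num) hx2
  omega

end helpers

section graphs
variable {V : Type*}

lemma reach_mono {A B : SimpleGraph V} (h : ∀ u v : V, A.Adj u v → B.Reachable u v)
    {u v : V} (r : A.Reachable u v) : B.Reachable u v := by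
  obtain ⟨p⟩ := r
  induction p with
  | nil => exact SimpleGraph.Reachable.refl _
  | cons ha _ ih => exact (h _ _ ha).trans ih

lemma vertConn_le (Γ : SimpleGraph V) {S : Set V} (hfin : S.Finite)
    (h : ¬ (Γ.induce Sᶜ).Preconnected ∨ Sᶜ.Subsingleton) : vertConn Γ ≤ S.ncard :=
  Nat.sInf_le ⟨S, hfin, rfl, h⟩

lemma vertConn_set_nonempty [Finite V] (Γ : SimpleGraph V) :
    {k | ∃ S : Set V, S.Finite ∧ S.ncard = k ∧
      (¬ (Γ.induce Sᶜ).Preconnected ∨ Sᶜ.Subsingleton)}.Nonempty :=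
  ⟨(Set.univ : Set V).ncard, Set.univ, Set.toFinite _, rfl,
    Or.inr (by rw [Set.compl_univ]; exact Set.subsingleton_empty)⟩

lemma vertConn_pos [Finite V] [Nontrivial V] {Γ : SimpleGraph V} (hc : Γ.Connected) :
    1 ≤ vertConn Γ := by
  rw [Nat.one_le_iff_ne_zero]
  intro h0
  have hmem := Nat.sInf_eq_zero.mp h0
  rcases hmem with hmem | hemp
  · obtain ⟨S, hfin, hcard, hS⟩ := hmem
    have hSe : S = ∅ := (Set.ncard_eq_zero hfin).mp hcard
    subst hSe
    rw [Set.compl_empty] at hS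
    rcases hS with h | h
    · exact h ((SimpleGraph.induceUnivIso Γ).preconnected_iff.mpr hc.preconnected)
    · obtain ⟨a, b, hab⟩ := exists_pair_ne V
      exact hab (h (Set.mem_univ a) (Set.mem_univ b))
  · exact (vertConn_set_nonempty Γ).ne_empty hemp

end graphs

section graphs2
variable {V : Type*}

lemma reach_eq_of_isolated {A : SimpleGraph V} {u : V} (h : ∀ w, ¬ A.Adj u w)
    {v : V} (r : A.Reachable u v) : u = v := by
  obtain ⟨p⟩ := r
  cases p with
  | nil => rfl
  | cons ha _ => exact absurd ha (h _)

lemma reach_closure {A : SimpleGraph V} {K : Set V}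
    (hK : ∀ u v : V, u ∈ K → A.Adj u v → v ∈ K) {u v : V} (hu : u ∈ K)
    (r : A.Reachable u v) : v ∈ K := by
  obtain ⟨p⟩ := r
  induction p with
  | nil => exact hu
  | cons ha p ih => exact ih (hK _ _ hu ha)

end graphs2

section fwd
variable {G : Type*} [Group G] [Fintype G]

lemma star_adj (hexp : ∀ x : G, x ≠ 1 → orderOf x = 2) {u v : G} :
    (powerGraph G).Adj u v ↔ u ≠ v ∧ (u = 1 ∨ v = 1) := by
  constructor
  · rintro ⟨hne, hp⟩
    refine ⟨hne, ?_⟩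
    have key : ∀ a b : G, (∃ n : ℕ, 0 < n ∧ b = a ^ n) → a ≠ b → a = 1 ∨ b = 1 := by
      rintro a b ⟨n, hn, rfl⟩ hab
      by_cases ha : a = 1
      · exact Or.inl ha
      · right
        have h2 := hexp a ha
        have := pow_mod_orderOf a n
        rw [h2] at this
        have hmod : n % 2 = 0 ∨ n % 2 = 1 := by omega
        rcases hmod with h | h
        · rw [← this, h, pow_zero]
        · exfalso; apply hab; rw [← this, h, pow_one]
    rcases hp with h | h
    · exact key u v h hne
    · exact (key v u h hne.symm).symm
  · rintro ⟨hne, h1 | h1⟩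
    · subst h1; exact pg_adj_one (fun h => hne h.symm)
    · subst h1; exact (pg_adj_one hne).symm

lemma three_nonident (h4 : 4 ≤ Fintype.card G) :
    ∃ a b : G, a ≠ 1 ∧ b ≠ 1 ∧ a ≠ b := by
  classical
  have : 2 ≤ (Finset.univ.erase (1 : G)).card := by
    rw [Finset.card_erase_of_mem (Finset.mem_univ _)]
    have : Fintype.card G = Finset.univ.card := rfl
    omega
  obtain ⟨a, ha, b, hb, hab⟩ := Finset.one_lt_card.mp this
  exact ⟨a, b, Finset.ne_of_mem_erase ha, Finset.ne_of_mem_erase hb, hab⟩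
end fwd

section fwd2
variable {G : Type*} [Group G] [Fintype G]

lemma pg_connected [Nontrivial G] : (powerGraph G).Connected := by
  have hreach1 : ∀ v : G, (powerGraph G).Reachable 1 v := fun v => by
    by_cases h : v = 1
    · rw [h]
    · exact (pg_adj_one h).reachable
  exact SimpleGraph.Connected.mk (fun u v => (hreach1 u).symm.trans (hreach1 v))

lemma fwd_vertConn (hexp : ∀ x : G, x ≠ 1 → orderOf x = 2) (h4 : 4 ≤ Fintype.card G) :
    vertConn (powerGraph G) = 1 := by
  haveI hnt : Nontrivial G := Fintype.one_lt_card_iff_nontrivial.mp (by omega)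
  refine le_antisymm ?_ (vertConn_pos pg_connected)
  have hle := vertConn_le (powerGraph G) (S := {(1 : G)}) (Set.finite_singleton _) ?_
  · rwa [Set.ncard_singleton] at hle
  left
  intro hp
  obtain ⟨a, b, ha, hb, hab⟩ := three_nonident h4
  have hma : a ∈ ({(1:G)}ᶜ : Set G) := by simpa using ha
  have hmb : b ∈ ({(1:G)}ᶜ : Set G) := by simpa using hb
  have r := hp ⟨a, hma⟩ ⟨b, hmb⟩
  have := reach_eq_of_isolated (u := (⟨a, hma⟩ : ({(1:G)}ᶜ : Set G))) ?_ r
  · exact hab (congrArg Subtype.val this)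
  · rintro ⟨w, hw⟩ hadj
    have : a = 1 ∨ w = 1 := ((star_adj hexp).mp hadj).2
    rcases this with h | h
    · exact ha h
    · exact hw (by simpa using h)

lemma fwd_delete (hexp : ∀ x : G, x ≠ 1 → orderOf x = 2) (h4 : 4 ≤ Fintype.card G)
    {a : G} (ha : a ≠ 1) :
    vertConn ((powerGraph G).deleteEdges {s(1, a)}) = 0 := by
  haveI hnt : Nontrivial G := Fintype.one_lt_card_iff_nontrivial.mp (by omega)
  apply Nat.sInf_eq_zero.mpr
  left
  refine ⟨∅, Set.finite_empty, Set.ncard_empty _, Or.inl ?_⟩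
  intro hp
  obtain ⟨b, hb⟩ := exists_ne a
  have r := hp ⟨a, by simp⟩ ⟨b, by simp⟩
  have := reach_eq_of_isolated (u := (⟨a, by simp⟩ : ((∅ : Set G)ᶜ : Set G))) ?_ r
  · exact hb (congrArg Subtype.val this).symm
  · rintro ⟨w, hw⟩ hadj
    have hadj' : ((powerGraph G).deleteEdges {s(1, a)}).Adj a w := hadj
    rw [SimpleGraph.deleteEdges_adj] at hadj'
    obtain ⟨hadjG, hnot⟩ := hadj'
    have : a = 1 ∨ w = 1 := ((star_adj hexp).mp hadjG).2
    rcases this with h | h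
    · exact ha h
    · subst h
      exact hnot (by rw [Sym2.eq_swap]; rfl)

lemma fwd_main (hexp : ∀ x : G, x ≠ 1 → orderOf x = 2) (h4 : 4 ≤ Fintype.card G) :
    powerGraph G ≠ ⊤ ∧ MinimallyConnected (powerGraph G) := by
  haveI hnt : Nontrivial G := Fintype.one_lt_card_iff_nontrivial.mp (by omega)
  obtain ⟨a, b, ha, hb, hab⟩ := three_nonident h4
  constructor
  · intro h
    have : (powerGraph G).Adj a b := by rw [h]; exact hab
    rcases ((star_adj hexp).mp this).2 with h1 | h1
    · exact ha h1
    · exact hb h1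
  refine ⟨hnt, pg_connected, ?_⟩
  intro e he
  rw [fwd_vertConn hexp h4]
  induction e with
  | _ u v =>
    rw [SimpleGraph.mem_edgeSet] at he
    rcases ((star_adj hexp).mp he).2 with h1 | h1
    · subst h1
      have hv : v ≠ 1 := fun h => ((star_adj hexp).mp he).1 h.symm
      simpa using fwd_delete hexp h4 hv
    · subst h1
      have hu : u ≠ 1 := fun h => ((star_adj hexp).mp he).1 h
      have : s(u, (1:G)) = s((1:G), u) := Sym2.eq_swap
      rw [this]
      simpa using fwd_delete hexp h4 hu
end fwd2

section bwd
variable {G : Type*} [Group G] [Fintype G]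

lemma exists_nonadj (hne_top : powerGraph G ≠ ⊤) :
    ∃ u v : G, u ≠ v ∧ ¬ (powerGraph G).Adj u v := by
  by_contra h
  push_neg at h
  apply hne_top
  ext u v
  simp only [SimpleGraph.top_adj]
  exact ⟨fun ha => ha.ne, fun hne => h u v hne⟩

lemma bwd_exp (hne_top : powerGraph G ≠ ⊤) (hmc : MinimallyConnected (powerGraph G)) :
    ∀ x : G, x ≠ 1 → orderOf x = 2 := by
  classical
  intro x hx1
  by_contra hx2
  set Γ := powerGraph G with hΓ
  haveI hnt : Nontrivial G := hmc.1
  have hconn : Γ.Connected := hmc.2.1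
  set k := vertConn Γ with hk
  have hk1 : 1 ≤ k := vertConn_pos hconn
  -- noncompleteness bound : k + 2 ≤ card G
  obtain ⟨u0, v0, hne0, hnadj⟩ := exists_nonadj hne_top
  have hkcard : k + 2 ≤ Fintype.card G := by
    have hle : k ≤ (({u0, v0} : Set G)ᶜ).ncard := by
      apply vertConn_le
      · exact Set.toFinite _
      · rw [compl_compl]
        left
        intro hp
        have r := hp ⟨u0, by simp⟩ ⟨v0, by simp⟩
        have := reach_eq_of_isolated (u := (⟨u0, by simp⟩ : ({u0, v0} : Set G))) ?_ r
        · exact hne0 (congrArg Subtype.val this)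
        · rintro ⟨w, hw⟩ hadj
          have hadj' : Γ.Adj u0 w := hadj
          rcases hw with h | h
          · subst h; exact Γ.irrefl hadj'
          · simp only [Set.mem_singleton_iff] at h; subst h; exact hnadj hadj'
    have hsum : ({u0, v0} : Set G).ncard + (({u0, v0} : Set G)ᶜ).ncard = Fintype.card G := by
      rw [Set.ncard_add_ncard_compl, Nat.card_eq_fintype_card]
    have h2 : ({u0, v0} : Set G).ncard = 2 := Set.ncard_pair hne0
    omega
  -- the edge x ~ x⁻¹
  have he : Γ.Adj x x⁻¹ := pg_adj_self_inv hx1 hx2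
  have hxnei : x ≠ x⁻¹ := he.ne
  have hdel := hmc.2.2 s(x, x⁻¹) (Γ.mem_edgeSet.mpr he)
  set Γ' := Γ.deleteEdges {s(x, x⁻¹)} with hΓ'
  have hmem := Nat.sInf_mem (vertConn_set_nonempty Γ')
  have hmem' : vertConn Γ' ∈ {k | ∃ S : Set G, S.Finite ∧ S.ncard = k ∧
      (¬ (Γ'.induce Sᶜ).Preconnected ∨ Sᶜ.Subsingleton)} := hmem
  rw [hdel, ← hk] at hmem'
  obtain ⟨S, hSfin, hScard, hS⟩ := hmem'
  rcases hS with hdisc | hsub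
  swap
  · have := vertConn_le Γ hSfin (Or.inr hsub)
    omega
  -- S disconnects Γ' ; it must not disconnect Γ
  by_cases hpre : (Γ.induce Sᶜ).Preconnected
  swap
  · have := vertConn_le Γ hSfin (Or.inl hpre)
    omega
  by_cases hw : ∃ w, w ∈ Sᶜ ∧ w ≠ x ∧ w ≠ x⁻¹ ∧ Γ.Adj x w
  · -- reroute through w : Γ' restricted to Sᶜ is still preconnected
    obtain ⟨w, hwS, hwx, hwxi, hwadj⟩ := hw
    apply hdisc
    intro a b
    refine reach_mono (A := Γ.induce Sᶜ) ?_ (hpre a b)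
    rintro ⟨a, haS⟩ ⟨b, hbS⟩ hab
    have hab' : Γ.Adj a b := hab
    by_cases he' : s(a, b) = s(x, x⁻¹)
    · -- replace the edge by the path through w
      have adj1 : Γ'.Adj x w := by
        rw [hΓ', SimpleGraph.deleteEdges_adj]
        refine ⟨hwadj, ?_⟩
        simp only [Set.mem_singleton_iff, Sym2.eq_iff]
        rintro (⟨-, h⟩ | ⟨h, -⟩)
        · exact hwxi h
        · exact hxnei h
      have adj2 : Γ'.Adj x⁻¹ w := by
        rw [hΓ', SimpleGraph.deleteEdges_adj]
        refine ⟨pg_adj_inv hwadj hwxi, ?_⟩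
        simp only [Set.mem_singleton_iff, Sym2.eq_iff]
        rintro (⟨h, -⟩ | ⟨-, h⟩)
        · exact hxnei h.symm
        · exact hwx h
      rw [Sym2.eq_iff] at he'
      rcases he' with ⟨hax, hbxi⟩ | ⟨haxi, hbx⟩
      · refine (SimpleGraph.Adj.reachable (v := (⟨w, hwS⟩ : ↥Sᶜ)) ?_).trans
          (SimpleGraph.Adj.reachable ?_)
        · show Γ'.Adj a w; rw [hax]; exact adj1
        · show Γ'.Adj w b; rw [hbxi]; exact adj2.symm
      · refine (SimpleGraph.Adj.reachable (v := (⟨w, hwS⟩ : ↥Sᶜ)) ?_).trans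
          (SimpleGraph.Adj.reachable ?_)
        · show Γ'.Adj a w; rw [haxi]; exact adj2
        · show Γ'.Adj w b; rw [hbx]; exact adj1.symm
    · refine SimpleGraph.Adj.reachable ?_
      show Γ'.Adj a b
      rw [hΓ', SimpleGraph.deleteEdges_adj]
      exact ⟨hab', by simpa using he'⟩
  · -- no such w : then M = N(x) \ {x⁻¹} is a small cutset of Γ
    push_neg at hw
    set M : Set G := {z : G | Γ.Adj x z ∧ z ≠ x⁻¹} with hM
    have hMS : M ⊆ S := by
      rintro m ⟨hadj, hmne⟩
      by_contra hmS
      exact hw m (Set.mem_compl hmS) hadj.ne' hmne hadj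
    have hMcard : M.ncard ≤ k - 1 := hScard ▸ Set.ncard_le_ncard hMS hSfin
    obtain ⟨z, hz⟩ : ∃ z : G, z ∉ M ∪ {x, x⁻¹} := by
      by_contra hc
      push_neg at hc
      have hsub : (Set.univ : Set G) ⊆ M ∪ {x, x⁻¹} := fun z _ => hc z
      have h1 : (Set.univ : Set G).ncard ≤ (M ∪ {x, x⁻¹}).ncard :=
        Set.ncard_le_ncard hsub (Set.toFinite _)
      have h2 : (M ∪ {x, x⁻¹}).ncard ≤ M.ncard + ({x, x⁻¹} : Set G).ncard :=
        Set.ncard_union_le _ _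
      have h3 : ({x, x⁻¹} : Set G).ncard = 2 := Set.ncard_pair hxnei
      have h4 : (Set.univ : Set G).ncard = Fintype.card G := by
        rw [Set.ncard_univ, Nat.card_eq_fintype_card]
      omega
    simp only [Set.mem_union, Set.mem_insert_iff, Set.mem_singleton_iff, not_or] at hz
    obtain ⟨hzM, hzx, hzxi⟩ := hz
    have hxM : x ∈ Mᶜ := fun h => Γ.irrefl h.1
    have hzMc : z ∈ Mᶜ := hzM
    have hcut : k ≤ M.ncard := by
      apply vertConn_le Γ (Set.toFinite M)
      left
      intro hp
      have r := hp ⟨x, hxM⟩ ⟨z, hzMc⟩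
      have hcl := reach_closure (K := {p : ↥(Mᶜ) | (p : G) = x ∨ (p : G) = x⁻¹}) ?_ (Or.inl rfl) r
      · rcases hcl with h | h
        · exact hzx h
        · exact hzxi h
      · rintro ⟨u, huM⟩ ⟨v, hvM⟩ hu hadj
        have hadj' : Γ.Adj u v := hadj
        have hvM' : (powerGraph G).Adj x v → v = x⁻¹ := by
          intro h
          by_contra hvne
          exact hvM ⟨h, hvne⟩
        rcases hu with hu | hu
        · right; exact hvM' (by have hu2 : u = x := hu; rwa [hu2] at hadj')
        · by_cases hvx : v = x
          · left; exact hvx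
          · right
            apply hvM'
            have := pg_adj_inv (x := x⁻¹) (z := v) (by have hu2 : u = x⁻¹ := hu; rwa [hu2] at hadj') (by rwa [inv_inv])
            rwa [inv_inv] at this
    omega
end bwd

section bwd2
variable {G : Type*} [Group G] [Fintype G]
lemma bwd_card (hne_top : powerGraph G ≠ ⊤) (hexp : ∀ x : G, x ≠ 1 → orderOf x = 2) :
    4 ≤ Fintype.card G := by
  classical
  obtain ⟨u0, v0, hne0, hnadj⟩ := exists_nonadj hne_top
  have hu1 : u0 ≠ 1 ∧ v0 ≠ 1 := by
    by_contra h
    push_neg at h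
    apply hnadj
    rw [star_adj hexp]
    refine ⟨hne0, ?_⟩
    by_cases h1 : u0 = 1
    · exact Or.inl h1
    · exact Or.inr (h h1)
  obtain ⟨hu1, hv1⟩ := hu1
  have hself : ∀ y : G, y ≠ 1 → y * y = 1 := by
    intro y hy
    have := pow_orderOf_eq_one y
    rw [hexp y hy, pow_two] at this
    exact this
  set w := u0 * v0 with hw
  have hw1 : w ≠ 1 := by
    intro h
    apply hne0
    have : v0 = u0⁻¹ := eq_inv_of_mul_eq_one_right h
    rw [this, inv_eq_of_mul_eq_one_right (hself u0 hu1)]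
  have hwu : w ≠ u0 := fun h => hv1 (by
    have := mul_left_cancel (a := u0) (b := v0) (c := 1) (by rw [mul_one]; exact h)
    exact this)
  have hwv : w ≠ v0 := fun h => hu1 (by
    have := mul_right_cancel (a := u0) (b := v0) (c := 1) (by rw [one_mul]; exact h)
    exact this)
  have c1 : ({v0, w} : Finset G).card = 2 := Finset.card_pair hwv.symm
  have c2 : ({u0, v0, w} : Finset G).card = 3 := by
    rw [Finset.card_insert_of_notMem (by simp [hne0, hwu.symm]), c1]
  have c3 : ({1, u0, v0, w} : Finset G).card = 4 := by
    rw [Finset.card_insert_of_notMem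
      (by simp only [Finset.mem_insert, Finset.mem_singleton, not_or]
          exact ⟨fun h => hu1 h.symm, fun h => hv1 h.symm, fun h => hw1 h.symm⟩), c2]
  calc 4 = ({1, u0, v0, w} : Finset G).card := c3.symm
  _ ≤ Fintype.card G := Finset.card_le_univ _

end bwd2


end

/-- A finite group `G` is an elementary abelian 2-group of rank at least 2 if and
only if its power graph is non-complete and minimally connected. -/
theorem stmt_1 (G : Type*) [Group G] [Fintype G] :
    ((∀ x : G, x ≠ 1 → orderOf x = 2) ∧ 4 ≤ Fintype.card G) ↔
      (powerGraph G ≠ ⊤ ∧ MinimallyConnected (powerGraph G)) := by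
  constructor
  · rintro ⟨hexp, h4⟩
    exact fwd_main hexp h4
  · rintro ⟨hne, hmc⟩
    exact ⟨bwd_exp hne hmc, bwd_card hne (bwd_exp hne hmc)⟩
end

section
/- Let G be a finite group with no maximal subgroup of order two. If the power graph 𝒢(G) is minimally edge-connected, then the order of G is a power of a prime. -/
open Subgroup

section Aux

variable {G : Type*} [Group G] [Fintype G]

lemma pg_adj_one_s4 {x : G} (hx : x ≠ 1) : (powerGraph G).Adj 1 x :=
  show 1 ≠ x ∧ _ from ⟨fun h => hx h.symm, Or.inr ⟨orderOf x, orderOf_pos x, (pow_orderOf_eq_one x).symm⟩⟩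

lemma pg_mem_zpowers_iff_pow {a b : G} (hb : b ∈ zpowers a) : ∃ n : ℕ, 0 < n ∧ b = a ^ n := by
  have h1 : b ∈ Submonoid.powers a :=
    (isOfFinOrder_of_finite a).mem_powers_iff_mem_zpowers.mpr hb
  obtain ⟨n, hn⟩ := h1
  rcases Nat.eq_zero_or_pos n with rfl | hpos
  · exact ⟨orderOf a, orderOf_pos a, by
      rw [pow_orderOf_eq_one]; simpa using hn.symm⟩
  · exact ⟨n, hpos, hn.symm⟩

lemma pg_adj_iff {u v : G} :
    (powerGraph G).Adj u v ↔ u ≠ v ∧ (v ∈ zpowers u ∨ u ∈ zpowers v) := by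
  show (u ≠ v ∧ _) ↔ _
  constructor
  · rintro ⟨hne, h⟩
    refine ⟨hne, ?_⟩
    rcases h with ⟨n, _, rfl⟩ | ⟨m, _, rfl⟩
    · exact Or.inl (pow_mem (mem_zpowers u) n)
    · exact Or.inr (pow_mem (mem_zpowers v) m)
  · rintro ⟨hne, h | h⟩
    · exact ⟨hne, Or.inl (pg_mem_zpowers_iff_pow h)⟩
    · exact ⟨hne, Or.inr (pg_mem_zpowers_iff_pow h)⟩

end Aux
section Graph

variable {G : Type*} [Group G] [Fintype G]

open Subgroup

lemma pg_neighborSet_one [Nontrivial G] :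
    (powerGraph G).neighborSet 1 = {(1 : G)}ᶜ := by
  ext x
  simp only [SimpleGraph.mem_neighborSet, Set.mem_compl_iff, Set.mem_singleton_iff]
  constructor
  · intro hx
    exact fun h => (powerGraph G).loopless.irrefl 1 (h ▸ hx)
  · intro hx
    exact pg_adj_one_s4 hx

lemma gDegree_one [Nontrivial G] :
    gDegree (powerGraph G) 1 = Fintype.card G - 1 := by
  classical
  rw [gDegree, pg_neighborSet_one]
  rw [Set.ncard_eq_toFinset_card', Set.toFinset_compl, Set.toFinset_singleton,
    Finset.card_compl, Finset.card_singleton]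

lemma gDegree_le (x : G) : gDegree (powerGraph G) x ≤ Fintype.card G - 1 := by
  classical
  rw [gDegree]
  have h1 : (powerGraph G).neighborSet x ⊆ {x}ᶜ := by
    intro z hz
    simp only [Set.mem_compl_iff, Set.mem_singleton_iff]
    exact fun h => (powerGraph G).loopless.irrefl x (h ▸ hz)
  calc ((powerGraph G).neighborSet x).ncard ≤ ({x}ᶜ : Set G).ncard :=
        Set.ncard_le_ncard h1 (Set.toFinite _)
    _ = Fintype.card G - 1 := by
        rw [Set.ncard_eq_toFinset_card', Set.toFinset_compl, Set.toFinset_singleton,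
          Finset.card_compl, Finset.card_singleton]

lemma minDeg_le (x : G) : gMinDegree (powerGraph G) ≤ gDegree (powerGraph G) x :=
  Nat.sInf_le ⟨x, rfl⟩

lemma exists_minDeg : ∃ x : G, gDegree (powerGraph G) x = gMinDegree (powerGraph G) := by
  have h : (Set.range (gDegree (powerGraph G))).Nonempty := ⟨_, 1, rfl⟩
  exact Nat.sInf_mem h

lemma one_le_gDegree [Nontrivial G] (x : G) : 1 ≤ gDegree (powerGraph G) x := by
  rw [gDegree, Nat.one_le_iff_ne_zero, Ne, Set.ncard_eq_zero (Set.toFinite _)]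
  intro h
  rcases eq_or_ne x 1 with rfl | hx
  · obtain ⟨y, hy⟩ := exists_ne (1 : G)
    have : y ∈ (powerGraph G).neighborSet 1 := pg_adj_one_s4 hy
    simp [h] at this
  · have : (1 : G) ∈ (powerGraph G).neighborSet x := ((pg_adj_one_s4 hx).symm : _)
    simp [h] at this

lemma one_le_minDeg [Nontrivial G] : 1 ≤ gMinDegree (powerGraph G) := by
  obtain ⟨x, hx⟩ := exists_minDeg (G := G)
  rw [← hx]; exact one_le_gDegree x

/-- Key counting lemma: if `F` contains every edge from `Bᶜ` to `B` and `1 ∉ B`,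
then every vertex of `B` has degree at most `F.card`. -/
lemma cut_counting (F : Finset (Sym2 G)) (B : Set G) (h1 : (1:G) ∉ B)
    (hcross : ∀ a b : G, a ∉ B → b ∈ B → (powerGraph G).Adj a b → s(a, b) ∈ F)
    {b₀ : G} (hb₀ : b₀ ∈ B) : gDegree (powerGraph G) b₀ ≤ F.card := by
  classical
  set Γ := powerGraph G with hΓ
  set P : Finset (G × G) :=
    Finset.univ.filter (fun z : G × G => z.1 ∉ B ∧ z.2 ∈ B ∧ Γ.Adj z.1 z.2) with hP
  have h2 : P.card ≤ F.card := by
    apply Finset.card_le_card_of_injOn (fun z => s(z.1, z.2))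
    · intro z hz
      have hz' := (Finset.mem_filter.mp hz).2
      exact hcross _ _ hz'.1 hz'.2.1 hz'.2.2
    · intro z hz z' hz' hEq
      rw [Finset.mem_coe] at hz hz'
      have hz1 := (Finset.mem_filter.mp hz).2
      have hz2 := (Finset.mem_filter.mp hz').2
      rcases Sym2.eq_iff.mp hEq with ⟨h1', h2'⟩ | ⟨h1', h2'⟩
      · exact Prod.ext h1' h2'
      · exact absurd (h1' ▸ hz2.2.1) hz1.1
  have h3 : gDegree Γ b₀ ≤ P.card := by
    rw [gDegree, Set.ncard_eq_toFinset_card']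
    apply Finset.card_le_card_of_injOn
      (fun a => if a ∈ B then ((1:G), a) else (a, b₀))
    · intro a ha
      rw [Finset.mem_coe, Set.mem_toFinset, SimpleGraph.mem_neighborSet] at ha
      by_cases haB : a ∈ B
      · have ha1 : a ≠ 1 := fun h => h1 (h ▸ haB)
        simp only [Finset.mem_coe, if_pos haB]
        exact Finset.mem_filter.mpr ⟨Finset.mem_univ _, h1, haB, pg_adj_one_s4 ha1⟩
      · simp only [Finset.mem_coe, if_neg haB]
        exact Finset.mem_filter.mpr ⟨Finset.mem_univ _, haB, hb₀, ha.symm⟩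
    · intro a ha a' ha' hEq
      simp only [Finset.mem_coe, Set.mem_toFinset, SimpleGraph.mem_neighborSet] at ha ha'
      by_cases haB : a ∈ B <;> by_cases haB' : a' ∈ B <;>
        simp only [haB, haB', if_pos, if_neg, not_false_iff, Prod.mk.injEq] at hEq
      · exact hEq.2
      · exact absurd (hEq.2 ▸ ha) (fun h => Γ.loopless.irrefl b₀ h)
      · exact absurd (hEq.2.symm ▸ ha') (fun h => Γ.loopless.irrefl b₀ h)
      · exact hEq.1
  exact h3.trans h2

lemma not_connected_of_isolated {V : Type*} (Γ' : SimpleGraph V) {x y : V} (hxy : x ≠ y)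
    (hiso : ∀ z, ¬ Γ'.Adj x z) : ¬ Γ'.Connected := by
  intro hc
  obtain ⟨w⟩ := hc.preconnected x y
  cases w with
  | nil => exact hxy rfl
  | cons h p => exact hiso _ h

lemma edgeConn_set_nonempty [Nontrivial G] (Γ' : SimpleGraph G) :
    {k | ∃ s : Finset (Sym2 G), s.card = k ∧ ↑s ⊆ Γ'.edgeSet ∧
      ¬ (Γ'.deleteEdges ↑s).Connected}.Nonempty := by
  classical
  obtain ⟨x, y, hxy⟩ := exists_pair_ne G
  refine ⟨_, Γ'.edgeSet.toFinset, rfl, by simp, not_connected_of_isolated _ hxy ?_⟩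
  intro z hz
  rw [SimpleGraph.deleteEdges_adj] at hz
  exact hz.2 (by simp only [Finset.mem_coe, Set.mem_toFinset]; exact hz.1)

lemma edgeConn_le_deg [Nontrivial G] (x : G) :
    edgeConn (powerGraph G) ≤ gDegree (powerGraph G) x := by
  classical
  set Γ := powerGraph G with hΓ
  obtain ⟨y, hy⟩ := exists_ne x
  set F : Finset (Sym2 G) := ((Γ.neighborSet x).toFinset).image (fun z => s(x, z)) with hF
  apply Nat.sInf_le
  refine ⟨F, ?_, ?_, ?_⟩
  · rw [hF, Finset.card_image_of_injOn, gDegree, Set.ncard_eq_toFinset_card']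
    intro a ha b hb hab
    simp only [Finset.mem_coe, Set.mem_toFinset, SimpleGraph.mem_neighborSet] at ha hb
    rcases Sym2.eq_iff.mp hab with ⟨_, h⟩ | ⟨h1', h2'⟩
    · exact h
    · exact absurd h1' (Γ.ne_of_adj hb)
  · intro e he
    simp only [hF, Finset.coe_image, Set.mem_image, Finset.mem_coe, Set.mem_toFinset] at he
    obtain ⟨z, hz, rfl⟩ := he
    rw [SimpleGraph.mem_edgeSet]
    exact hz
  · apply not_connected_of_isolated _ hy.symm
    intro z hz
    rw [SimpleGraph.deleteEdges_adj] at hz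
    apply hz.2
    simp only [hF, Finset.coe_image, Set.mem_image, Finset.mem_coe]
    exact ⟨z, by rw [Set.mem_toFinset]; exact hz.1, rfl⟩

lemma one_le_edgeConn [Nontrivial G] (hc : (powerGraph G).Connected) :
    1 ≤ edgeConn (powerGraph G) := by
  rw [Nat.one_le_iff_ne_zero]
  intro h0
  have hmem := Nat.sInf_mem (edgeConn_set_nonempty (powerGraph G))
  rw [show sInf _ = edgeConn (powerGraph G) from rfl, h0] at hmem
  obtain ⟨s, hs0, _, hnc⟩ := hmem
  rw [Finset.card_eq_zero] at hs0
  subst hs0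
  simp only [Finset.coe_empty, SimpleGraph.deleteEdges_empty] at hnc
  exact hnc hc

end Graph
section Glue

variable {G : Type*} [Group G] [Fintype G]

open Subgroup

lemma endpoint_min_degree (h : MinimallyEdgeConnected (powerGraph G)) :
    ∀ u v : G, (powerGraph G).Adj u v →
      gDegree (powerGraph G) u = gMinDegree (powerGraph G) ∨
      gDegree (powerGraph G) v = gMinDegree (powerGraph G) := by
  classical
  obtain ⟨hnt, hconn, hmin⟩ := h
  haveI : Nontrivial G := hnt
  intro u v huv
  set Γ := powerGraph G with hΓ
  set δ := gMinDegree Γ with hδ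
  set lam := edgeConn Γ with hlam
  have hlamδ : lam ≤ δ := by
    obtain ⟨x, hx⟩ := exists_minDeg (G := G)
    rw [hδ, ← hx]
    exact edgeConn_le_deg x
  have hlam1 : 1 ≤ lam := one_le_edgeConn hconn
  have hδ1 : 1 ≤ δ := one_le_minDeg
  set e : Sym2 G := s(u, v) with he
  have heE : e ∈ Γ.edgeSet := huv
  have hdel := hmin e heE
  -- extract a witness cut for the deleted graph
  have hne := edgeConn_set_nonempty (Γ.deleteEdges {e})
  have hmem := Nat.sInf_mem hne
  rw [show sInf _ = edgeConn (Γ.deleteEdges {e}) from rfl, hdel] at hmem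
  obtain ⟨s, hscard, hssub, hsnc⟩ := hmem
  have hes : e ∉ s := by
    intro hes
    have := hssub hes
    rw [SimpleGraph.edgeSet_deleteEdges] at this
    exact this.2 rfl
  set F : Finset (Sym2 G) := insert e s with hFdef
  have hFcard : F.card = lam := by
    rw [hFdef, Finset.card_insert_of_notMem hes, hscard]
    omega
  have hdd : Γ.deleteEdges ↑F = (Γ.deleteEdges {e}).deleteEdges ↑s := by
    ext a b
    simp only [SimpleGraph.deleteEdges_adj, hFdef, Finset.coe_insert, Set.mem_insert_iff,
      Set.mem_singleton_iff, Finset.mem_coe]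
    tauto
  have hFnc : ¬ (Γ.deleteEdges ↑F).Connected := by rw [hdd]; exact hsnc
  set B : Set G := {y : G | ¬ (Γ.deleteEdges ↑F).Reachable 1 y} with hB
  have h1B : (1 : G) ∉ B := fun hx => hx (SimpleGraph.Reachable.refl 1)
  have hBne : B.Nonempty := by
    by_contra hBe
    rw [Set.not_nonempty_iff_eq_empty] at hBe
    apply hFnc
    rw [SimpleGraph.connected_iff]
    refine ⟨fun a b => ?_, ⟨1⟩⟩
    have ha : a ∉ B := by rw [hBe]; exact Set.notMem_empty a
    have hb : b ∉ B := by rw [hBe]; exact Set.notMem_empty b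
    rw [hB, Set.mem_setOf_eq, not_not] at ha hb
    exact ha.symm.trans hb
  have hcross : ∀ a b : G, a ∉ B → b ∈ B → Γ.Adj a b → s(a, b) ∈ F := by
    intro a b haB hbB hab
    by_contra habF
    have hadj : (Γ.deleteEdges ↑F).Adj a b :=
      SimpleGraph.deleteEdges_adj.mpr ⟨hab, habF⟩
    rw [hB, Set.mem_setOf_eq, not_not] at haB
    exact hbB (haB.trans hadj.reachable)
  -- every vertex of B has degree δ
  have hdegB : ∀ b ∈ B, gDegree Γ b = δ := by
    intro b hbB
    have h1 : gDegree Γ b ≤ F.card := cut_counting F B h1B hcross hbB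
    have h2 : δ ≤ gDegree Γ b := minDeg_le b
    omega
  by_cases huB : u ∈ B
  · exact Or.inl (hdegB u huB)
  by_cases hvB : v ∈ B
  · exact Or.inr (hdegB v hvB)
  -- otherwise e does not cross, so s alone is a crossing family: contradiction
  exfalso
  obtain ⟨b₀, hb₀⟩ := hBne
  have hcross' : ∀ a b : G, a ∉ B → b ∈ B → Γ.Adj a b → s(a, b) ∈ s := by
    intro a b haB hbB hab
    have := hcross a b haB hbB hab
    rw [hFdef, Finset.mem_insert] at this
    rcases this with h' | h'
    · exfalso
      rcases Sym2.eq_iff.mp h' with ⟨h1', h2'⟩ | ⟨h1', h2'⟩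
      · exact hvB (h2' ▸ hbB)
      · exact huB (h2' ▸ hbB)
    · exact h'
  have h1 : gDegree Γ b₀ ≤ s.card := cut_counting s B h1B hcross' hb₀
  have h2 : δ ≤ gDegree Γ b₀ := minDeg_le b₀
  omega

end Glue
section Grp

variable {G : Type*} [Group G] [Fintype G]

open Subgroup

lemma zpowers_eq_of_le_of_orderOf_le {y z : G} (hle : zpowers y ≤ zpowers z)
    (hord : orderOf z ≤ orderOf y) : zpowers y = zpowers z := by
  have h1 : ((zpowers z : Subgroup G) : Set G).ncard ≤ ((zpowers y : Subgroup G) : Set G).ncard := by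
    rw [← Nat.card_coe_set_eq, ← Nat.card_coe_set_eq]
    simpa only [SetLike.coe_sort_coe, Nat.card_zpowers] using hord
  exact SetLike.ext' (Set.eq_of_subset_of_ncard_le hle h1 (Set.toFinite _))

lemma exists_maximal_zpowers (x : G) :
    ∃ y : G, x ∈ zpowers y ∧ IsMaxCyclicGen y := by
  classical
  obtain ⟨y, hy, hmax⟩ := Finset.exists_max_image
    (Finset.univ.filter (fun y : G => x ∈ zpowers y)) orderOf
    ⟨x, by simp [mem_zpowers]⟩
  rw [Finset.mem_filter] at hy
  refine ⟨y, hy.2, fun z hz => ?_⟩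
  have hxz : x ∈ zpowers z := hz hy.2
  have h1 : orderOf z ≤ orderOf y := hmax z (Finset.mem_filter.mpr ⟨Finset.mem_univ _, hxz⟩)
  exact zpowers_eq_of_le_of_orderOf_le hz h1

lemma neighborSet_of_max {y : G} (hy : IsMaxCyclicGen y) :
    (powerGraph G).neighborSet y = ((zpowers y : Subgroup G) : Set G) \ {y} := by
  ext z
  simp only [SimpleGraph.mem_neighborSet, pg_adj_iff, Set.mem_diff, SetLike.mem_coe,
    Set.mem_singleton_iff]
  constructor
  · rintro ⟨hne, hmem | hmem⟩
    · exact ⟨hmem, fun h => hne h.symm⟩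
    · have := hy z ((zpowers_le).mpr hmem)
      exact ⟨this ▸ mem_zpowers z, fun h => hne h.symm⟩
  · rintro ⟨hz, hne⟩
    exact ⟨fun h => hne h.symm, Or.inl hz⟩

lemma deg_of_max {y : G} (hy : IsMaxCyclicGen y) :
    gDegree (powerGraph G) y = orderOf y - 1 := by
  rw [gDegree, neighborSet_of_max hy,
    Set.ncard_diff_singleton_of_mem (mem_zpowers y)]
  congr 1
  rw [← Nat.card_coe_set_eq]
  simpa only [SetLike.coe_sort_coe] using Nat.card_zpowers y

/-- The number of `z : G` generating the same cyclic subgroup as `z₀` is `φ(orderOf z₀)`. -/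
lemma card_same_zpowers (z₀ : G) :
    {z : G | zpowers z = zpowers z₀}.ncard = Nat.totient (orderOf z₀) := by
  classical
  rw [Set.ncard_eq_toFinset_card', Set.toFinset_setOf]
  haveI : IsCyclic (zpowers z₀) := by
    refine ⟨⟨⟨z₀, mem_zpowers z₀⟩, fun x => ?_⟩⟩
    obtain ⟨k, hk⟩ := mem_zpowers_iff.mp x.2
    exact mem_zpowers_iff.mpr ⟨k, by ext; simpa using hk⟩
  have hcard : Fintype.card (zpowers z₀) = orderOf z₀ := Fintype.card_zpowers
  have h1 : (Finset.univ.filter (fun a : (zpowers z₀) => orderOf a = orderOf z₀)).card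
      = Nat.totient (orderOf z₀) := by
    have := IsCyclic.card_orderOf_eq_totient (α := (zpowers z₀))
      (d := orderOf z₀) (by rw [hcard])
    simpa using this
  rw [← h1]
  symm
  refine Finset.card_bij (fun b _ => (b : G)) ?_ ?_ ?_
  · intro b hb
    rw [Finset.mem_filter] at hb ⊢
    refine ⟨Finset.mem_univ _, ?_⟩
    apply zpowers_eq_of_le_of_orderOf_le
    · exact zpowers_le.mpr b.2
    · rw [orderOf_coe, hb.2]
  · intro a ha a' ha' hEq
    exact Subtype.ext hEq
  · intro a ha
    have ha2 := (Finset.mem_filter.mp ha).2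
    have hmem : a ∈ zpowers z₀ := ha2 ▸ mem_zpowers a
    refine ⟨⟨a, hmem⟩, ?_, rfl⟩
    rw [Finset.mem_filter]
    refine ⟨Finset.mem_univ _, ?_⟩
    rw [orderOf_mk, ← Nat.card_zpowers, ← Nat.card_zpowers, ha2]

end Grp
section NT

lemma nt_contra {m p q : ℕ} (hp : p.Prime) (hq : q.Prime) (hqp : q ≠ p) (hpm : p ∣ m)
    (hqm : q ∣ m) (hm0 : m ≠ 0) (hp2 : 2 ∣ m → p = 2)
    (hdvd : Nat.totient m ∣ m - m / p) : False := by
  set a := m.factorization p with ha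
  have ha1 : 1 ≤ a := hp.factorization_pos_of_dvd hm0 hpm
  set r := m / p ^ a with hr
  have hmr : m = p ^ a * r := (Nat.ordProj_mul_ordCompl_eq_self m p).symm
  have hpr : ¬ p ∣ r := Nat.not_dvd_ordCompl hp hm0
  have hr0 : r ≠ 0 := by intro hh; rw [hh, mul_zero] at hmr; exact hm0 hmr
  have hqr : q ∣ r := by
    have hcop : Nat.Coprime q (p ^ a) := ((Nat.coprime_primes hq hp).mpr hqp).pow_right a
    refine hcop.dvd_of_dvd_mul_left ?_
    rw [← hmr]; exact hqm
  have h2r : ¬ 2 ∣ r := by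
    intro h2
    rcases eq_or_ne p 2 with rfl | hp2'
    · exact hpr h2
    · have h2m : (2:ℕ) ∣ m := by rw [hmr]; exact Dvd.dvd.mul_left h2 _
      exact hp2' (hp2 h2m)
  have hq2 : q ≠ 2 := fun hh => h2r (hh ▸ hqr)
  have hr2 : 2 < r := by
    have hq3 : 3 ≤ q := by have := hq.two_le; omega
    have := Nat.le_of_dvd (Nat.pos_of_ne_zero hr0) hqr
    omega
  have hcop : Nat.Coprime (p ^ a) r := (hp.coprime_iff_not_dvd.mpr hpr).pow_left a
  have htot : Nat.totient m = p ^ (a-1) * (p-1) * Nat.totient r := by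
    rw [hmr, Nat.totient_mul hcop, Nat.totient_prime_pow hp ha1]
  have hpa : p ^ a = p * p ^ (a-1) := by
    conv_lhs => rw [show a = (a-1)+1 by omega]
    rw [pow_succ']
  have hdiv : m / p = p ^ (a-1) * r := by
    rw [hmr, hpa, mul_assoc, Nat.mul_div_cancel_left _ hp.pos]
  have hsub : m - m / p = p ^ (a-1) * (p-1) * r := by
    rw [hdiv, hmr, hpa]
    calc p * p ^ (a-1) * r - p ^ (a-1) * r
        = p * (p ^ (a-1) * r) - 1 * (p ^ (a-1) * r) := by ring_nf
      _ = (p - 1) * (p ^ (a-1) * r) := (Nat.sub_mul p 1 _).symm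
      _ = p ^ (a-1) * (p-1) * r := by ring
  rw [htot, hsub] at hdvd
  have hpos : 0 < p ^ (a-1) * (p-1) := by
    have h2 := hp.two_le
    exact Nat.mul_pos (pow_pos hp.pos _) (by omega)
  have hdvd' : (p ^ (a-1) * (p-1)) * Nat.totient r ∣ (p ^ (a-1) * (p-1)) * r := by
    calc (p ^ (a-1) * (p-1)) * Nat.totient r = p ^ (a-1) * (p-1) * Nat.totient r := by ring
      _ ∣ p ^ (a-1) * (p-1) * r := hdvd
      _ = (p ^ (a-1) * (p-1)) * r := by ring
  have hrt : Nat.totient r ∣ r := (Nat.mul_dvd_mul_iff_left hpos).mp hdvd'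
  have heven : 2 ∣ Nat.totient r := (Nat.totient_even hr2).two_dvd
  exact h2r (heven.trans hrt)

end NT

section Tot

open Subgroup

variable {G : Type*} [Group G] [Fintype G]

lemma totient_dvd_ncard_gens {w : G} {m : ℕ} (hlt : orderOf w < m)
    (hord : ∀ z : G, w ∈ zpowers z → z ∉ zpowers w → orderOf z = m) :
    Nat.totient m ∣ {z : G | w ∈ zpowers z ∧ z ∉ zpowers w}.ncard := by
  classical
  set S : Set G := {z : G | w ∈ zpowers z ∧ z ∉ zpowers w} with hS
  set S' : Finset G := S.toFinset with hS'
  have hcard : S.ncard = S'.card := Set.ncard_eq_toFinset_card' S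
  rw [hcard]
  have key : S'.card = ∑ H ∈ S'.image (fun z => zpowers z),
      (S'.filter (fun z => zpowers z = H)).card :=
    Finset.card_eq_sum_card_fiberwise (fun x hx => Finset.mem_image_of_mem _ hx)
  have hfib : ∀ H ∈ S'.image (fun z => zpowers z),
      (S'.filter (fun z => zpowers z = H)).card = Nat.totient m := by
    intro H hH
    obtain ⟨z₀, hz₀, rfl⟩ := Finset.mem_image.mp hH
    rw [hS', Set.mem_toFinset, hS, Set.mem_setOf_eq] at hz₀
    have hz₀m : orderOf z₀ = m := hord z₀ hz₀.1 hz₀.2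
    have hEq : S'.filter (fun z => zpowers z = zpowers z₀)
        = {z : G | zpowers z = zpowers z₀}.toFinset := by
      ext z
      simp only [Finset.mem_filter, hS', Set.mem_toFinset, hS, Set.mem_setOf_eq]
      constructor
      · rintro ⟨-, hz⟩; exact hz
      · intro hz
        refine ⟨⟨?_, ?_⟩, hz⟩
        · rw [hz]; exact hz₀.1
        · intro hzw
          have h1 : orderOf z = orderOf z₀ := by
            rw [← Nat.card_zpowers, ← Nat.card_zpowers, hz]
          have h2 : orderOf z ∣ orderOf w := orderOf_dvd_of_mem_zpowers hzw
          rw [h1, hz₀m] at h2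
          have := Nat.le_of_dvd (orderOf_pos w) h2
          omega
    rw [hEq, ← Set.ncard_eq_toFinset_card', card_same_zpowers z₀, hz₀m]
  rw [key, Finset.sum_congr rfl hfib, Finset.sum_const, smul_eq_mul]
  exact dvd_mul_left _ _

end Tot
/-- A finite group with no maximal subgroup of order two whose power graph is
minimally edge-connected has prime power order. -/
theorem stmt_4 (G : Type*) [Group G] [Fintype G]
    (hmax : ¬ ∃ H : Subgroup G, Nat.card H = 2 ∧ IsCoatom H)
    (h : MinimallyEdgeConnected (powerGraph G)) :
    ∃ p k : ℕ, p.Prime ∧ Nat.card G = p ^ k := by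
  classical
  haveI : Nontrivial G := h.1
  have hend := endpoint_min_degree h
  set Γ := powerGraph G with hΓ
  set δ := gMinDegree Γ with hδdef
  set n := Fintype.card G with hn
  have hn2 : 2 ≤ n := Fintype.one_lt_card
  have hncard : Nat.card G = n := Nat.card_eq_fintype_card
  by_cases hA : gDegree Γ 1 = δ
  · -- the graph is complete
    have hcomp : ∀ x y : G, x ≠ y → Γ.Adj x y := by
      intro x y hxy
      have h3 : gDegree Γ 1 = n - 1 := gDegree_one
      have hdx : gDegree Γ x = n - 1 := by
        have h1 : gDegree Γ x ≤ n - 1 := gDegree_le x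
        have h2 : δ ≤ gDegree Γ x := minDeg_le x
        omega
      have hsub : Γ.neighborSet x ⊆ {x}ᶜ := by
        intro z hz
        simp only [Set.mem_compl_iff, Set.mem_singleton_iff]
        exact fun hEq => Γ.loopless.irrefl x (hEq ▸ hz)
      have hle : ({x}ᶜ : Set G).ncard ≤ (Γ.neighborSet x).ncard := by
        have hcc : ({x}ᶜ : Set G).ncard = n - 1 := by
          rw [Set.ncard_eq_toFinset_card', Set.toFinset_compl, Set.toFinset_singleton,
            Finset.card_compl, Finset.card_singleton]
        rw [hcc, show (Γ.neighborSet x).ncard = gDegree Γ x from rfl, hdx]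
      have heq : Γ.neighborSet x = {x}ᶜ :=
        Set.eq_of_subset_of_ncard_le hsub hle (Set.toFinite _)
      have hy : y ∈ Γ.neighborSet x := by
        rw [heq]; simpa using hxy.symm
      exact hy
    refine ⟨n.minFac, n.primeFactorsList.length, Nat.minFac_prime (by omega), ?_⟩
    rw [hncard]
    apply Nat.eq_prime_pow_of_unique_prime_dvd (by omega)
    intro d hd hdn
    rcases eq_or_ne d n.minFac with hEq | hne
    · exact hEq
    exfalso
    haveI := Fact.mk hd
    haveI := Fact.mk (Nat.minFac_prime (show n ≠ 1 by omega))
    obtain ⟨x, hx⟩ := exists_prime_orderOf_dvd_card d (by rw [← hn]; exact hdn)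
    obtain ⟨y, hy⟩ := exists_prime_orderOf_dvd_card n.minFac (by rw [← hn]; exact n.minFac_dvd)
    have hxy : x ≠ y := fun hEq => hne (by rw [← hx, hEq, hy])
    have hadj := (pg_adj_iff).mp (hcomp x y hxy)
    rcases hadj.2 with hmem | hmem
    · have hd1 := orderOf_dvd_of_mem_zpowers hmem
      rw [hx, hy] at hd1
      exact hne ((Nat.prime_dvd_prime_iff_eq (Nat.minFac_prime (by omega)) hd).mp hd1).symm
    · have hd1 := orderOf_dvd_of_mem_zpowers hmem
      rw [hx, hy] at hd1
      exact hne ((Nat.prime_dvd_prime_iff_eq hd (Nat.minFac_prime (by omega))).mp hd1)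
  · -- every non-identity vertex has minimum degree
    have hB : ∀ x : G, x ≠ 1 → gDegree Γ x = δ := by
      intro x hx
      rcases hend 1 x (pg_adj_one_s4 hx) with h1 | h2
      · exact absurd h1 hA
      · exact h2
    set m := δ + 1 with hm
    have hδ1 : 1 ≤ δ := one_le_minDeg
    have hm2 : 2 ≤ m := by omega
    have hmaxord : ∀ y : G, IsMaxCyclicGen y → y ≠ 1 → orderOf y = m := by
      intro y hy hy1
      have h1 := deg_of_max hy
      rw [hB y hy1] at h1
      have := orderOf_pos y
      omega
    have hmax_ne : ∀ x y : G, x ≠ 1 → x ∈ zpowers y → y ≠ 1 := by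
      intro x y hx hxy hy1
      rw [hy1, zpowers_one_eq_bot, Subgroup.mem_bot] at hxy
      exact hx hxy
    have hdvd : ∀ x : G, orderOf x ∣ m := by
      intro x
      rcases eq_or_ne x 1 with rfl | hx
      · simp
      · obtain ⟨y, hxy, hy⟩ := exists_maximal_zpowers x
        have hy1 : y ≠ 1 := hmax_ne x y hx hxy
        rw [← hmaxord y hy hy1]
        exact orderOf_dvd_of_mem_zpowers hxy
    set p := m.minFac with hpdef
    have hpp : p.Prime := Nat.minFac_prime (by omega)
    have hpm : p ∣ m := Nat.minFac_dvd m
    by_cases hq : ∀ d : ℕ, d.Prime → d ∣ m → d = p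
    · refine ⟨p, (Nat.card G).primeFactorsList.length, hpp, ?_⟩
      apply Nat.eq_prime_pow_of_unique_prime_dvd (by omega)
      intro d hd hdn
      haveI := Fact.mk hd
      obtain ⟨x, hx⟩ := exists_prime_orderOf_dvd_card d
        (by rw [← hn]; rw [hncard] at hdn; exact hdn)
      exact hq d hd (hx ▸ hdvd x)
    · exfalso
      push_neg at hq
      obtain ⟨q, hqp, hqm, hqne⟩ := hq
      obtain ⟨x₀, hx₀⟩ := exists_ne (1 : G)
      obtain ⟨y, hxy, hy⟩ := exists_maximal_zpowers x₀
      have hy1 : y ≠ 1 := hmax_ne x₀ y hx₀ hxy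
      have hyord : orderOf y = m := hmaxord y hy hy1
      set w := y ^ p with hw
      have hordw : orderOf w = m / p := by
        rw [hw, orderOf_pow, hyord, Nat.gcd_eq_right hpm]
      have hq2 : 2 ≤ q := hqp.two_le
      have hqmp : q ∣ m / p := by
        have hcop : Nat.Coprime q p := (Nat.coprime_primes hqp hpp).mpr hqne
        have hcop' : Nat.Coprime q p := hcop
        refine (Nat.Coprime.dvd_of_dvd_mul_right hcop') ?_
        rw [Nat.div_mul_cancel hpm]; exact hqm
      have hmp_pos : 0 < m / p := Nat.div_pos (Nat.minFac_le (by omega)) hpp.pos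
      have hmp2 : 2 ≤ m / p := le_trans hq2 (Nat.le_of_dvd hmp_pos hqmp)
      have hmp_lt : m / p < m := Nat.div_lt_self (by omega) hpp.one_lt
      have hw1 : w ≠ 1 := by
        intro hh; rw [hh, orderOf_one] at hordw; omega
      have hdegw : gDegree Γ w = δ := hB w hw1
      set S : Set G := {z : G | w ∈ zpowers z ∧ z ∉ zpowers w} with hS
      have hNdecomp : Γ.neighborSet w = (((zpowers w : Subgroup G) : Set G) \ {w}) ∪ S := by
        ext z
        simp only [hΓ, SimpleGraph.mem_neighborSet, pg_adj_iff, Set.mem_union, Set.mem_diff,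
          SetLike.mem_coe, Set.mem_singleton_iff, hS, Set.mem_setOf_eq]
        constructor
        · rintro ⟨hne, hmem | hmem⟩
          · exact Or.inl ⟨hmem, fun hEq => hne hEq.symm⟩
          · by_cases hzw : z ∈ zpowers w
            · exact Or.inl ⟨hzw, fun hEq => hne hEq.symm⟩
            · exact Or.inr ⟨hmem, hzw⟩
        · rintro (⟨hmem, hne⟩ | ⟨hmem, hzw⟩)
          · exact ⟨fun hEq => hne hEq.symm, Or.inl hmem⟩
          · refine ⟨?_, Or.inr hmem⟩
            intro hEq
            exact hzw (by rw [← hEq]; exact mem_zpowers w)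
      have hdisj : Disjoint (((zpowers w : Subgroup G) : Set G) \ {w}) S := by
        rw [Set.disjoint_left]
        rintro z ⟨hz, -⟩ ⟨-, hzw⟩
        exact hzw hz
      have hcard1 : (((zpowers w : Subgroup G) : Set G) \ {w}).ncard = m / p - 1 := by
        rw [Set.ncard_diff_singleton_of_mem (mem_zpowers w)]
        congr 1
        rw [← Nat.card_coe_set_eq]
        simpa only [SetLike.coe_sort_coe] using (Nat.card_zpowers w).trans hordw
      have hNcard : gDegree Γ w = (m / p - 1) + S.ncard := by
        rw [gDegree, hNdecomp, Set.ncard_union_eq hdisj (Set.toFinite _) (Set.toFinite _),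
          hcard1]
      have hScard : S.ncard = m - m / p := by
        rw [hdegw] at hNcard
        omega
      have hSord : ∀ z : G, w ∈ zpowers z → z ∉ zpowers w → orderOf z = m := by
        intro z hwz hzw
        have h1 : m / p ∣ orderOf z := hordw ▸ orderOf_dvd_of_mem_zpowers hwz
        have h2 : orderOf z ∣ m := hdvd z
        obtain ⟨e, he⟩ := h1
        have hep : e ∣ p := by
          have hdd : (m/p) * e ∣ (m/p) * p := by
            rw [← he, Nat.div_mul_cancel hpm]; exact h2
          exact (Nat.mul_dvd_mul_iff_left hmp_pos).mp hdd
        rcases hpp.eq_one_or_self_of_dvd e hep with he1 | hep'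
        · exfalso
          rw [he1, mul_one] at he
          have hle : zpowers w ≤ zpowers z := zpowers_le.mpr hwz
          have heq := zpowers_eq_of_le_of_orderOf_le hle (by rw [he, hordw])
          exact hzw (by rw [heq]; exact mem_zpowers z)
        · rw [he, hep', Nat.div_mul_cancel hpm]
      have htotdvd : Nat.totient m ∣ S.ncard := by
        rw [hS]
        exact totient_dvd_ncard_gens (by omega) hSord
      rw [hScard] at htotdvd
      have hp2 : 2 ∣ m → p = 2 := by
        intro h2m
        have h1 := Nat.minFac_le_of_dvd (le_refl 2) h2m
        have h2 := hpp.two_le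
        omega
      exact nt_contra hpp hqp hqne hpm hqm (by omega) hp2 htotdvd
end
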